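/- Let α > 0 and let f : ℝⁿ → ℝ, g : ℝⁿ → ℝᵐ, h : ℝⁿ → ℝˡ be differentiable, and fix θ ∈ ℝⁿ. If (ξ*, u, v) satisfies the QP-KKT conditions at θ, then the Lie derivative of f along ξ* satisfies the identity ⟪∇f(θ), ξ*⟫ = −‖ξ*‖² + α Σᵢ uᵢ gᵢ(θ) + α Σⱼ vⱼ hⱼ(θ). (Part ii of the Proposition 'Time derivatives and Invariance'.) -/
import Mathlib


open scoped RealInnerProductSpace BigOperators

/-- The KKT conditions of the safe-gradient-flow quadratic program at `θ`,
with primal point `ξ` and multipliers `(u, v)`. -/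
def QPKKT {n m l : ℕ} (α : ℝ)
    (f : EuclideanSpace ℝ (Fin n) → ℝ)
    (g : Fin m → EuclideanSpace ℝ (Fin n) → ℝ)
    (h : Fin l → EuclideanSpace ℝ (Fin n) → ℝ)
    (θ ξ : EuclideanSpace ℝ (Fin n)) (u : Fin m → ℝ) (v : Fin l → ℝ) : Prop :=
  ξ + gradient f θ + ∑ i, u i • gradient (g i) θ + ∑ j, v j • gradient (h j) θ = 0 ∧
  (∀ i, ⟪gradient (g i) θ, ξ⟫ + α * g i θ ≤ 0) ∧
  (∀ j, ⟪gradient (h j) θ, ξ⟫ + α * h j θ = 0) ∧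
  (∀ i, 0 ≤ u i) ∧
  ∑ i, u i * (⟪gradient (g i) θ, ξ⟫ + α * g i θ) = 0

/-- Part ii of "Time derivatives and Invariance": at a QP-KKT point,
`⟪∇f(θ), ξ*⟫ = -‖ξ*‖² + α Σᵢ uᵢ gᵢ(θ) + α Σⱼ vⱼ hⱼ(θ)`. -/
theorem lie_derivative_identity {n m l : ℕ} (α : ℝ) (hα : 0 < α)
    (f : EuclideanSpace ℝ (Fin n) → ℝ)
    (g : Fin m → EuclideanSpace ℝ (Fin n) → ℝ)
    (h : Fin l → EuclideanSpace ℝ (Fin n) → ℝ)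
    (hf : Differentiable ℝ f) (hg : ∀ i, Differentiable ℝ (g i))
    (hh : ∀ j, Differentiable ℝ (h j))
    (θ ξstar : EuclideanSpace ℝ (Fin n)) (u : Fin m → ℝ) (v : Fin l → ℝ)
    (hkkt : QPKKT α f g h θ ξstar u v) :
    ⟪gradient f θ, ξstar⟫ =
      -‖ξstar‖ ^ 2 + α * ∑ i, u i * g i θ + α * ∑ j, v j * h j θ := by
  obtain ⟨hstat, hb, hc, hd, he⟩ := hkkt
  have key := congrArg (fun w => ⟪w, ξstar⟫) hstat
  simp only [inner_add_left, inner_zero_left, sum_inner, real_inner_smul_left] at key ⊢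
  have hge : ∑ i, u i * ⟪gradient (g i) θ, ξstar⟫ = -(α * ∑ i, u i * g i θ) := by
    have : ∑ i, u i * (⟪gradient (g i) θ, ξstar⟫ + α * g i θ) =
        ∑ i, u i * ⟪gradient (g i) θ, ξstar⟫ + α * ∑ i, u i * g i θ := by
      rw [Finset.mul_sum]; rw [← Finset.sum_add_distrib]; congr 1; ext i; ring
    linarith [he, this ▸ he]
  have hhe : ∑ j, v j * ⟪gradient (h j) θ, ξstar⟫ = -(α * ∑ j, v j * h j θ) := by
    rw [Finset.mul_sum, ← Finset.sum_neg_distrib]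
    refine Finset.sum_congr rfl fun j _ => ?_
    linear_combination v j * hc j
  rw [real_inner_self_eq_norm_sq] at key
  linarith [key]
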